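/- For n ≥ 1, the number of lists of length 2n with entries in {1, -1} whose total sum is 0 and all of whose proper nonempty partial sums (sums of initial segments of length 1, …, 2n-1) are strictly positive equals catalan(n-1). (Equivalently, the number of irreducible Dyck paths of length 2n, i.e., Dyck paths that return to the axis only at the end, is the (n-1)-st Catalan number.) -/

import Mathlib

open List DyckStep

namespace Stmt7Aux

/-- Value of a Dyck step as an integer. -/
def val : DyckStep → ℤ
  | U => 1
  | D => -1

lemma val_inj : Function.Injective val := by
  intro a b h; cases a <;> cases b <;> simp [val] at h ⊢

lemma sum_map_val (w : List DyckStep) :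
    (w.map val).sum = (w.count U : ℤ) - w.count D := by
  induction w with
  | nil => simp
  | cons a t ih =>
    cases a <;> simp [val, ih, count_cons] <;> ring

/-- Step corresponding to an integer. -/
def toStep (x : ℤ) : DyckStep := if x = 1 then U else D

lemma val_toStep {x : ℤ} (h : x = 1 ∨ x = -1) : val (toStep x) = x := by
  rcases h with h | h <;> simp [toStep, val, h]

lemma map_val_toStep {m : List ℤ} (h : ∀ x ∈ m, x = 1 ∨ x = -1) :
    (m.map toStep).map val = m := by
  rw [List.map_map]
  conv_rhs => rw [← List.map_id m]
  exact List.map_congr_left fun x hx => val_toStep (h x hx)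

end Stmt7Aux

open Stmt7Aux

/-- For `n ≥ 1`, the number of lists of length `2n` with entries in `{1, -1}` whose
total sum is `0` and all of whose proper nonempty partial sums are strictly positive
(irreducible Dyck paths of length `2n`) equals `catalan (n-1)`. -/
theorem stmt_7 (n : ℕ) (hn : 1 ≤ n) :
    Nat.card {l : List ℤ // l.length = 2 * n ∧ (∀ x ∈ l, x = 1 ∨ x = -1) ∧
        (∀ i : ℕ, 0 < i → i < 2 * n → 0 < (l.take i).sum) ∧ l.sum = 0} =
      catalan (n - 1) := by
  have key : ∀ (p : DyckWord), p.semilength = n - 1 →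
      ((1 : ℤ) :: (p.toList.map val ++ [-1])).length = 2 * n ∧
      (∀ x ∈ (1 : ℤ) :: (p.toList.map val ++ [-1]), x = 1 ∨ x = -1) ∧
      (∀ i : ℕ, 0 < i → i < 2 * n →
        0 < (((1 : ℤ) :: (p.toList.map val ++ [-1])).take i).sum) ∧
      ((1 : ℤ) :: (p.toList.map val ++ [-1])).sum = 0 := by
    intro p hp
    have hlen : p.toList.length = 2 * (n - 1) := by
      rw [← p.two_mul_semilength_eq_length, hp]
    refine ⟨?_, ?_, ?_, ?_⟩
    · simp [hlen]; omega
    · intro x hx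
      simp only [mem_cons, mem_append, mem_map, mem_singleton] at hx
      rcases hx with h | ⟨s, _, rfl⟩ | (h | h)
      · left; exact h
      · cases s <;> simp [val]
      · right; exact h
      · exact absurd h List.not_mem_nil
    · intro i hi hi2
      obtain ⟨j, rfl⟩ : ∃ j, i = j + 1 := ⟨i - 1, by omega⟩
      rw [take_succ_cons, sum_cons]
      have hj : j ≤ p.toList.length := by
        rw [hlen]; omega
      rw [take_append_of_le_length (by simpa using hj), ← map_take, sum_map_val]
      have := p.count_D_le_count_U j
      have hcount : ((p.toList.take j).count D : ℤ) ≤ (p.toList.take j).count U := by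
        exact_mod_cast this
      linarith
    · rw [sum_cons, sum_append, sum_map_val, p.count_U_eq_count_D]
      simp
  have e : {p : DyckWord // p.semilength = n - 1} ≃
      {l : List ℤ // l.length = 2 * n ∧ (∀ x ∈ l, x = 1 ∨ x = -1) ∧
        (∀ i : ℕ, 0 < i → i < 2 * n → 0 < (l.take i).sum) ∧ l.sum = 0} := by
    refine Equiv.ofBijective
      (fun p => ⟨(1 : ℤ) :: (p.1.toList.map val ++ [-1]), key p.1 p.2⟩) ⟨?_, ?_⟩
    · rintro ⟨p, hp⟩ ⟨q, hq⟩ h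
      simp only [Subtype.mk.injEq, cons.injEq, append_cancel_right_eq, true_and] at h
      exact Subtype.ext (DyckWord.ext (List.map_injective_iff.mpr val_inj h))
    · rintro ⟨l, hlen, hsign, hpos, hsum⟩
      -- l is nonempty with first element 1 and last element -1
      have hne : l ≠ [] := by intro h; rw [h] at hlen; simp at hlen; omega
      obtain ⟨a, t, rfl⟩ := List.exists_cons_of_ne_nil hne
      have ha : a = 1 := by
        have h1 : (0:ℤ) < a := by simpa using hpos 1 one_pos (by omega)
        rcases hsign a mem_cons_self with h | h
        · exact h
        · omega
      subst ha
      have htne : t ≠ [] := by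
        intro h; rw [h] at hlen; simp at hlen; omega
      obtain ⟨m, b, rfl⟩ := (List.eq_nil_or_concat t).resolve_left htne
      simp only [List.concat_eq_append] at hlen hsign hpos hsum hne htne
      have hmlen : m.length = 2 * n - 2 := by
        simp at hlen; omega
      have hmsign : ∀ x ∈ m, x = 1 ∨ x = -1 := fun x hx =>
        hsign x (by simp [hx])
      have hb : b = -1 := by
        have h1 := hpos (2 * n - 1) (by omega) (by omega)
        have htake : ((1 : ℤ) :: (m ++ [b])).take (2 * n - 1) = 1 :: m := by
          have : 2 * n - 1 = m.length + 1 := by omega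
          rw [this, take_succ_cons]
          congr 1
          rw [take_append_of_le_length le_rfl, take_length]
        rw [htake] at h1
        have hsum' : ((1 : ℤ) :: (m ++ [b])).sum = 1 + m.sum + b := by
          simp [add_assoc]
        rw [hsum'] at hsum
        simp at h1
        rcases hsign b (by simp) with h | h
        · omega
        · exact h
      subst hb
      -- partial sums of m are nonnegative
      have hmsum : m.sum = 0 := by
        have : ((1 : ℤ) :: (m ++ [-1])).sum = 1 + m.sum + (-1) := by
          simp [add_assoc]
        rw [this] at hsum; omega
      have hmpre : ∀ j, 0 ≤ (m.take j).sum := by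
        intro j
        rcases le_or_gt m.length j with hj | hj
        · rw [take_of_length_le hj, hmsum]
        · have h1 := hpos (j + 1) (by omega) (by omega)
          rw [take_succ_cons, take_append_of_le_length (by omega), sum_cons] at h1
          omega
      -- build the Dyck word
      set w : List DyckStep := m.map toStep with hw
      have hmv : w.map val = m := map_val_toStep hmsign
      have hcount : ∀ j, ((w.take j).count U : ℤ) - (w.take j).count D =
          (m.take j).sum := by
        intro j
        rw [← sum_map_val, map_take, hmv]
      have hUD : w.count U = w.count D := by
        have h2 := hcount w.length
        rw [take_length, take_of_length_le (by simp [hw]), hmsum] at h2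
        omega
      have hpre : ∀ j, (w.take j).count D ≤ (w.take j).count U := by
        intro j
        have := hcount j
        have := hmpre j
        omega
      refine ⟨⟨⟨w, hUD, hpre⟩, ?_⟩, ?_⟩
      · show w.count U = n - 1
        have hlenw : w.length = 2 * n - 2 := by simp [hw, hmlen]
        have : w.length = w.count U + w.count D := by
          induction w with
          | nil => simp
          | cons a t ih =>
            cases a <;> simp [count_cons] at * <;> omega
        omega
      · exact Subtype.ext (by simp [hmv])
  rw [← Nat.card_congr e, Nat.card_eq_fintype_card,
    DyckWord.card_dyckWord_semilength_eq_catalan]
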